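/- Let μ, ν ∈ ℂ with |μ| = |ν| = 1, μ ≠ ν and μ ≠ −ν. Then the map (S,R) ↦ (μ·S*·Δ_m + ν·Δ_n·R, ν·R*·Δ_n + μ·Δ_m·S), where S ∈ ℂ^{m×n} and R ∈ ℂ^{n×m}, is surjective onto ℂ^{n×m} × ℂ^{m×n}; equivalently, T(μΔ_m, νΔ_n) = ℂ^{n×m} × ℂ^{m×n}. -/

import Mathlib

open Matrix

/-- The `n×n` upper-triangular Jordan block with eigenvalue `l`. -/
noncomputable def Jmat (n : ℕ) (l : ℂ) : Matrix (Fin n) (Fin n) ℂ :=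
  Matrix.of fun i j =>
    if (i : ℕ) = (j : ℕ) then l
    else if (j : ℕ) = (i : ℕ) + 1 then 1 else 0

/-- The symmetric matrix `Δ_n`: (1-based) entry `(j,k)` is `1` if `j+k = n+1`,
`i` if `j+k = n+2`, and `0` otherwise. -/
noncomputable def Dmat (n : ℕ) : Matrix (Fin n) (Fin n) ℂ :=
  Matrix.of fun i j =>
    if (i : ℕ) + (j : ℕ) + 1 = n then 1
    else if (i : ℕ) + (j : ℕ) = n then Complex.I
    else 0

/-- The `2m×2m` block matrix `H_m(l) = [[0, I],[J_m(l), 0]]`. -/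
noncomputable def Hmat (m : ℕ) (l : ℂ) : Matrix (Fin m ⊕ Fin m) (Fin m ⊕ Fin m) ℂ :=
  Matrix.fromBlocks 0 1 (Jmat m l) 0

/-- `T(A) = {CᴴA + AC}`, the tangent space to the *congruence class of `A`. -/
def Tset {n : Type*} [Fintype n] (A : Matrix n n ℂ) : Set (Matrix n n ℂ) :=
  {X | ∃ C : Matrix n n ℂ, X = Cᴴ * A + A * C}

/-- `T(M,N) = {(SᴴM + NR, RᴴN + MS)}`. -/
def Tpair {p q : Type*} [Fintype p] [Fintype q]
    (M : Matrix p p ℂ) (N : Matrix q q ℂ) :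
    Set (Matrix q p ℂ × Matrix p q ℂ) :=
  {X | ∃ (S : Matrix p q ℂ) (R : Matrix q p ℂ),
      X = (Sᴴ * M + N * R, Rᴴ * N + M * S)}


/-- For `|μ| = |ν| = 1`, `μ ≠ ±ν`: `T(μΔ_m, νΔ_n) = ℂ^{n×m} × ℂ^{m×n}`. -/
noncomputable def Nmat (n : ℕ) : Matrix (Fin n) (Fin n) ℂ :=
  Matrix.of fun i j => if (j : ℕ) = (i : ℕ) + 1 then 1 else 0

noncomputable def Fmat (n : ℕ) : Matrix (Fin n) (Fin n) ℂ :=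
  Matrix.of fun i j => if j = Fin.rev i then 1 else 0

lemma Fmat_mul (n : ℕ) (X : Matrix (Fin n) (Fin n) ℂ) (i j : Fin n) :
    (Fmat n * X) i j = X (Fin.rev i) j := by
  simp [Fmat, Matrix.mul_apply]

lemma Fmat_mul_Fmat (n : ℕ) : Fmat n * Fmat n = 1 := by
  ext i j
  rw [Fmat_mul]
  simp [Fmat, Matrix.one_apply, Fin.rev_rev, eq_comm]

lemma Nmat_pow (n k : ℕ) :
    (Nmat n) ^ k = Matrix.of fun (i j : Fin n) => if (j : ℕ) = (i : ℕ) + k then 1 else 0 := by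
  induction k with
  | zero =>
    ext i j
    simp [Matrix.one_apply, Fin.ext_iff, eq_comm]
  | succ k ih =>
    ext i j
    rw [pow_succ, ih]
    simp only [Matrix.mul_apply, Matrix.of_apply, Nmat]
    rw [Finset.sum_eq_single_of_mem ⟨min (i + k) (n-1), by omega⟩ (Finset.mem_univ _)]
    · rcases le_or_gt n (i + k + 1) with h | h
      · have : ¬ ((j:ℕ) = i + (k+1)) := by omega
        simp only [this, if_false]
        split_ifs with h1 h2 <;> simp <;> omega
      · have hm : (((⟨min (i + k) (n-1), by omega⟩ : Fin n)):ℕ) = (i:ℕ) + k := by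
          simp; omega
        have he : ((j:ℕ) = ((⟨min (i + k) (n-1), by omega⟩ : Fin n):ℕ) + 1) ↔ ((j:ℕ) = (i:ℕ) + (k+1)) := by
          simp; omega
        have hmin : ((i:ℕ) + k) ⊓ (n - 1) = (i:ℕ) + k := by omega
        simp [hm, he, hmin, Nat.add_assoc]
    · intro b _ hb
      have : ¬ ((b:ℕ) = (i:ℕ) + k) := by
        intro hc
        apply hb
        apply Fin.ext
        simp only [hc]
        omega
      simp [this]

lemma Nmat_nilpotent (n : ℕ) : IsNilpotent (Nmat n) := by
  refine ⟨n, ?_⟩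
  rw [Nmat_pow]
  ext i j
  have : ¬ ((j:ℕ) = (i:ℕ) + n) := by omega
  simp [this]

lemma Dmat_eq (n : ℕ) : Dmat n = Fmat n * (1 + Complex.I • Nmat n) := by
  ext i j
  rw [Fmat_mul]
  simp only [Dmat, Nmat, Matrix.add_apply, Matrix.smul_apply, Matrix.one_apply,
    Matrix.of_apply, Fin.val_rev]
  have hi := i.isLt; have hj := j.isLt
  split_ifs with h1 h2 h3 h4 h5 h6 h7 <;>
    simp_all [Fin.ext_iff] <;> omega

lemma Dmat_conjTranspose (n : ℕ) :
    (Dmat n)ᴴ = Fmat n * (1 - Complex.I • Nmat n) := by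
  ext i j
  rw [Fmat_mul]
  simp only [Dmat, Nmat, Matrix.sub_apply, Matrix.smul_apply, Matrix.one_apply,
    Matrix.of_apply, Fin.val_rev, Matrix.conjTranspose_apply]
  have hi := i.isLt; have hj := j.isLt
  split_ifs with h1 h2 h3 h4 h5 h6 h7 <;>
    simp_all [Fin.ext_iff, Complex.ext_iff] <;> omega

lemma commute_smul {A : Type*} [Ring A] [Algebra ℂ A] {x y : A} (h : Commute x y)
    (a b : ℂ) : Commute (a • x) (b • y) := by
  show (a • x) * (b • y) = (b • y) * (a • x)
  rw [smul_mul_smul_comm, smul_mul_smul_comm, h.eq, mul_comm a b]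

lemma key_lemma (m n : ℕ) (P : Matrix (Fin m) (Fin m) ℂ) (Q : Matrix (Fin n) (Fin n) ℂ)
    (hP : IsNilpotent P) (hQ : IsNilpotent Q) (c : ℂ) (hc : c ≠ 1)
    (S : Matrix (Fin m) (Fin n) ℂ)
    (hS : (1 + P) * S * (1 - Q) = c • ((1 - P) * S * (1 + Q))) : S = 0 := by
  let L : Module.End ℂ (Matrix (Fin m) (Fin n) ℂ) :=
    { toFun := fun X => P * X
      map_add' := fun X Y => Matrix.mul_add _ _ _
      map_smul' := fun a X => (Matrix.mul_smul _ _ _) }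
  let R : Module.End ℂ (Matrix (Fin m) (Fin n) ℂ) :=
    { toFun := fun X => X * Q
      map_add' := fun X Y => Matrix.add_mul _ _ _
      map_smul' := fun a X => (Matrix.smul_mul _ _ _) }
  have hLa : ∀ X : Matrix (Fin m) (Fin n) ℂ, L X = P * X := fun _ => rfl
  have hRa : ∀ X : Matrix (Fin m) (Fin n) ℂ, R X = X * Q := fun _ => rfl
  have hLpow : ∀ (k : ℕ) (X : Matrix (Fin m) (Fin n) ℂ), (L ^ k) X = P ^ k * X := by
    intro k
    induction k with
    | zero => intro X; simp [Matrix.one_mul]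
    | succ k ih =>
      intro X
      rw [pow_succ, Module.End.mul_apply, hLa, ih, ← Matrix.mul_assoc, ← pow_succ]
  have hRpow : ∀ (k : ℕ) (X : Matrix (Fin m) (Fin n) ℂ), (R ^ k) X = X * Q ^ k := by
    intro k
    induction k with
    | zero => intro X; simp [Matrix.mul_one]
    | succ k ih =>
      intro X
      rw [pow_succ, Module.End.mul_apply, hRa, ih, Matrix.mul_assoc, ← pow_succ']
  have hLnil : IsNilpotent L := by
    obtain ⟨k, hk⟩ := hP
    exact ⟨k, by ext X : 1; simp [hLpow, hk, Matrix.zero_mul]⟩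
  have hRnil : IsNilpotent R := by
    obtain ⟨k, hk⟩ := hQ
    exact ⟨k, by ext X : 1; simp [hRpow, hk, Matrix.mul_zero]⟩
  have hcom : Commute L R := by
    ext X : 1
    simp only [Module.End.mul_apply, hLa, hRa]
    rw [Matrix.mul_assoc]
  set Nop : Module.End ℂ (Matrix (Fin m) (Fin n) ℂ) :=
    (1 + c) • L - (1 + c) • R - (1 - c) • (L * R) with hNop
  have hNopnil : IsNilpotent Nop := by
    have h1 : IsNilpotent ((1 + c) • L) := hLnil.smul _
    have h2 : IsNilpotent ((1 + c) • R) := hRnil.smul _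
    have h3 : IsNilpotent ((1 - c) • (L * R)) :=
      (hcom.isNilpotent_mul_left hRnil).smul _
    have c12 : Commute ((1 + c) • L) ((1 + c) • R) := commute_smul hcom _ _
    have c13 : Commute ((1 + c) • L) ((1 - c) • (L * R)) :=
      commute_smul ((Commute.refl L).mul_right hcom) _ _
    have c23 : Commute ((1 + c) • R) ((1 - c) • (L * R)) :=
      commute_smul (hcom.symm.mul_right (Commute.refl R)) _ _
    exact Commute.isNilpotent_sub (Commute.sub_left c13 c23)
      (Commute.isNilpotent_sub c12 h1 h2) h3
  have h1c : (1 : ℂ) - c ≠ 0 := sub_ne_zero.2 (Ne.symm hc)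
  set A : Module.End ℂ (Matrix (Fin m) (Fin n) ℂ) := (1 - c) • (1 : Module.End ℂ (Matrix (Fin m) (Fin n) ℂ)) + Nop with hA
  have hAS : A S = 0 := by
    have expand : A S = (1 + P) * S * (1 - Q) - c • ((1 - P) * S * (1 + Q)) := by
      rw [hA, hNop]
      simp only [LinearMap.add_apply, LinearMap.sub_apply, LinearMap.smul_apply,
        Module.End.one_apply, Module.End.mul_apply, hLa, hRa]
      simp only [Matrix.add_mul, Matrix.mul_add, Matrix.sub_mul, Matrix.mul_sub,
        Matrix.one_mul, Matrix.mul_one, smul_sub, smul_add,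
        smul_smul, Matrix.mul_assoc]
      module
    rw [expand, hS, sub_self]
  have hAunit : IsUnit A := by
    have hAeq : A = ((1 - c) • (1 : Module.End ℂ (Matrix (Fin m) (Fin n) ℂ))) * (1 + ((1 - c)⁻¹ • Nop)) := by
      rw [mul_add, mul_one, hA]
      congr 1
      rw [smul_mul_assoc, one_mul, smul_smul, mul_inv_cancel₀ h1c, one_smul]
    rw [hAeq]
    refine IsUnit.mul ?_ (IsNilpotent.isUnit_one_add (hNopnil.smul _))
    rw [← Algebra.algebraMap_eq_smul_one]
    exact (isUnit_iff_ne_zero.2 h1c).map (algebraMap ℂ (Module.End ℂ (Matrix (Fin m) (Fin n) ℂ)))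
  obtain ⟨u, hu⟩ := hAunit
  have hfin : S = (↑u⁻¹ * ↑u : Module.End ℂ (Matrix (Fin m) (Fin n) ℂ)) S := by
    rw [u.inv_mul]; simp
  rw [hfin, Module.End.mul_apply, hu, hAS, map_zero]

lemma Fmat_cancel {n k : ℕ} {X Y : Matrix (Fin n) (Fin k) ℂ}
    (h : Fmat n * X = Fmat n * Y) : X = Y := by
  have h2 := congrArg (fun Z => Fmat n * Z) h
  simpa [← Matrix.mul_assoc, Fmat_mul_Fmat, Matrix.one_mul] using h2

lemma nilp_unit_cancel {n k : ℕ} (Q : Matrix (Fin n) (Fin n) ℂ) (hQ : IsNilpotent Q)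
    (R : Matrix (Fin n) (Fin k) ℂ) (h : (1 + Q) * R = 0) : R = 0 := by
  obtain ⟨u, hu⟩ := hQ.isUnit_one_add
  have h2 : ((u⁻¹ : _ˣ) : Matrix (Fin n) (Fin n) ℂ) * (((u : _ˣ) : Matrix (Fin n) (Fin n) ℂ) * R) = 0 := by
    rw [hu, h, Matrix.mul_zero]
  rw [← Matrix.mul_assoc, Units.inv_mul, Matrix.one_mul] at h2
  exact h2

lemma D_flip (n : ℕ) :
    Dmat n * (1 - Complex.I • Nmat n) = (Dmat n)ᴴ * (1 + Complex.I • Nmat n) := by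
  have key : ∀ Q : Matrix (Fin n) (Fin n) ℂ, (1 + Q) * (1 - Q) = (1 - Q) * (1 + Q) := by
    intro Q; noncomm_ring
  rw [Dmat_conjTranspose, Dmat_eq, Matrix.mul_assoc, Matrix.mul_assoc, key]

lemma unit_conj {μ : ℂ} (hμ : ‖μ‖ = 1) : star μ * μ = 1 := by
  rw [Complex.star_def, ← Complex.normSq_eq_conj_mul_self, Complex.normSq_eq_norm_sq, hμ]
  norm_num


theorem stmt13 (m n : ℕ) (μ ν : ℂ)
    (hμ : ‖μ‖ = 1) (hν : ‖ν‖ = 1)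
    (h1 : μ ≠ ν) (h2 : μ ≠ -ν)
    (B : Matrix (Fin n) (Fin m) ℂ) (A : Matrix (Fin m) (Fin n) ℂ) :
    ∃ (S : Matrix (Fin m) (Fin n) ℂ) (R : Matrix (Fin n) (Fin m) ℂ),
      B = Sᴴ * (μ • Dmat m) + (ν • Dmat n) * R ∧
      A = Rᴴ * (ν • Dmat n) + (μ • Dmat m) * S := by
  have hμ1 : star μ * μ = 1 := unit_conj hμ
  have hν1 : star ν * ν = 1 := unit_conj hν
  have hμ1' : μ * star μ = 1 := by rw [mul_comm]; exact hμ1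
  have hν1' : ν * star ν = 1 := by rw [mul_comm]; exact hν1
  have hν0 : ν ≠ 0 := by
    intro h; rw [h] at hν; simp at hν
  set P := Complex.I • Nmat m with hPdef
  set Q := Complex.I • Nmat n with hQdef
  have hPnil : IsNilpotent P := (Nmat_nilpotent m).smul _
  have hQnil : IsNilpotent Q := (Nmat_nilpotent n).smul _
  set c : ℂ := (star μ * ν) ^ 2 with hcdef
  have hc : c ≠ 1 := by
    intro hc1
    have hfac : (star μ * ν - 1) * (star μ * ν + 1) = 0 := by
      have h' : (star μ * ν) ^ 2 = 1 := hc1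
      linear_combination h'
    rcases mul_eq_zero.1 hfac with h | h
    · have he : star μ * ν = 1 := by linear_combination h
      apply h1
      have := congrArg (fun x => μ * x) he
      simp only [← mul_assoc, hμ1', one_mul, mul_one] at this
      exact this.symm
    · have he : star μ * ν = -1 := by linear_combination h
      apply h2
      have := congrArg (fun x => μ * x) he
      simp only [← mul_assoc, hμ1', one_mul, mul_one] at this
      rw [this]; ring
  let Ψ : (Matrix (Fin n) (Fin m) ℂ × Matrix (Fin m) (Fin n) ℂ) →ₗ[ℝ]
      (Matrix (Fin n) (Fin m) ℂ × Matrix (Fin m) (Fin n) ℂ) :=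
    { toFun := fun p => (p.2ᴴ * (μ • Dmat m) + (ν • Dmat n) * p.1,
        p.1ᴴ * (ν • Dmat n) + (μ • Dmat m) * p.2)
      map_add' := by
        intro p q
        simp only [Prod.fst_add, Prod.snd_add, Matrix.conjTranspose_add,
          Matrix.add_mul, Matrix.mul_add, Prod.mk_add_mk, Prod.mk.injEq]
        constructor <;> abel
      map_smul' := by
        intro r p
        simp only [Prod.smul_fst, Prod.smul_snd, Matrix.conjTranspose_smul,
          Matrix.smul_mul, Matrix.mul_smul, star_trivial, RingHom.id_apply,
          Prod.smul_mk, smul_add, Prod.mk.injEq]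
        constructor <;> rw [smul_comm] }
  have hΨ : ∀ p : Matrix (Fin n) (Fin m) ℂ × Matrix (Fin m) (Fin n) ℂ,
      Ψ p = (p.2ᴴ * (μ • Dmat m) + (ν • Dmat n) * p.1,
        p.1ᴴ * (ν • Dmat n) + (μ • Dmat m) * p.2) := fun _ => rfl
  have hinj : Function.Injective Ψ := by
    rw [injective_iff_map_eq_zero]
    rintro ⟨R, S⟩ hp
    rw [hΨ, Prod.mk_eq_zero] at hp
    obtain ⟨hz1, hz2⟩ := hp
    rw [Matrix.mul_smul, Matrix.smul_mul] at hz1 hz2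
    -- hz1 : μ • (Sᴴ * Dmat m) + ν • (Dmat n * R) = 0
    -- hz2 : ν • (Rᴴ * Dmat n) + μ • (Dmat m * S) = 0
    have hz1' := congrArg Matrix.conjTranspose hz1
    simp only [Matrix.conjTranspose_add, Matrix.conjTranspose_smul,
      Matrix.conjTranspose_mul, Matrix.conjTranspose_conjTranspose,
      Matrix.conjTranspose_zero] at hz1'
    -- hz1' : star μ • ((Dmat m)ᴴ * S) + star ν • (Rᴴ * (Dmat n)ᴴ) = 0
    have hA : Rᴴ * (Dmat n)ᴴ = -((ν * star μ) • ((Dmat m)ᴴ * S)) := by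
      rw [add_comm] at hz1'
      have h2' : star ν • (Rᴴ * (Dmat n)ᴴ) = -(star μ • ((Dmat m)ᴴ * S)) :=
        eq_neg_of_add_eq_zero_left hz1'
      calc Rᴴ * (Dmat n)ᴴ = (ν * star ν) • (Rᴴ * (Dmat n)ᴴ) := by
            rw [hν1', one_smul]
        _ = ν • (star ν • (Rᴴ * (Dmat n)ᴴ)) := by rw [smul_smul]
        _ = ν • -(star μ • ((Dmat m)ᴴ * S)) := by rw [h2']
        _ = -((ν * star μ) • ((Dmat m)ᴴ * S)) := by rw [smul_neg, smul_smul]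
    have hB : ν • (Rᴴ * Dmat n) = -(μ • (Dmat m * S)) :=
      eq_neg_of_add_eq_zero_left hz2
    have h3 := congrArg (fun X => X * (1 - Q)) hB
    simp only [Matrix.smul_mul, Matrix.neg_mul] at h3
    -- h3 : ν • (Rᴴ * Dmat n * (1 - Q)) = -(μ • (Dmat m * S * (1 - Q)))
    rw [Matrix.mul_assoc Rᴴ (Dmat n) (1 - Q), D_flip, ← Matrix.mul_assoc, hA] at h3
    rw [Matrix.neg_mul, Matrix.smul_mul, smul_neg, neg_inj, smul_smul] at h3
    rw [← hQdef] at h3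
    -- h3 : (ν * (ν * star μ)) • ((Dmat m)ᴴ * S * (1 + Q)) = μ • (Dmat m * S * (1 - Q))
    have h4 := congrArg (fun X => star μ • X) h3
    simp only [smul_smul] at h4
    have hsc : star μ * (ν * (ν * star μ)) = c := by rw [hcdef]; ring
    have hsc2 : star μ * μ = 1 := hμ1
    rw [hsc, hsc2, one_smul] at h4
    -- h4 : c • ((Dmat m)ᴴ * S * (1 + Q)) = Dmat m * S * (1 - Q)
    rw [Dmat_conjTranspose, Dmat_eq] at h4
    rw [show Fmat m * (1 - P) * S * (1 + Q) = Fmat m * ((1 - P) * S * (1 + Q)) by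
          rw [Matrix.mul_assoc, Matrix.mul_assoc, Matrix.mul_assoc],
        show Fmat m * (1 + P) * S * (1 - Q) = Fmat m * ((1 + P) * S * (1 - Q)) by
          rw [Matrix.mul_assoc, Matrix.mul_assoc, Matrix.mul_assoc],
        ← Matrix.mul_smul] at h4
    have h5 := Fmat_cancel h4
    -- h5 : c • ((1 - P) * S * (1 + Q)) = (1 + P) * S * (1 - Q)
    have hS0 : S = 0 := key_lemma m n P Q hPnil hQnil c hc S h5.symm
    have hR0 : R = 0 := by
      rw [hS0] at hz1
      simp only [Matrix.conjTranspose_zero, Matrix.zero_mul, smul_zero,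
        zero_add] at hz1
      -- hz1 : ν • (Dmat n * R) = 0
      have hDR : Dmat n * R = 0 := by
        rcases smul_eq_zero.1 hz1 with h | h
        · exact absurd h hν0
        · exact h
      rw [Dmat_eq, Matrix.mul_assoc] at hDR
      have hz : Fmat n * ((1 + Q) * R) = Fmat n * (0 : Matrix (Fin n) (Fin m) ℂ) := by
        rw [hDR, Matrix.mul_zero]
      exact nilp_unit_cancel Q hQnil R (Fmat_cancel hz)
    rw [hS0, hR0]; rfl
  have hsurj : Function.Surjective Ψ := LinearMap.injective_iff_surjective.1 hinj
  obtain ⟨⟨R, S⟩, hRS⟩ := hsurj (B, A)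
  rw [hΨ] at hRS
  refine ⟨S, R, ?_, ?_⟩
  · exact (congrArg Prod.fst hRS).symm
  · exact (congrArg Prod.snd hRS).symm
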